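/- Let f belong to CW²_Δ[−1,1] with constant M₂, and set L = (γ²M₂/π)·(1 + π√2/(γ·ln N)) and L₁ = M₂γ²/(8π). Then for every z ∈ ℂ with |Re z| > 1, the remainder R*_N(f,z) = Φ(f − S_N, z) satisfies |R*_N(f,z)| ≤ √((L·ln N)² + L₁²)/N². -/

import Mathlib

open Real MeasureTheory Filter Topology

section helpers
open Set intervalIntegral

lemma sqrt_ratio (A B C : ℝ) (hA : 0 < A) (hB : 0 < B) (hC : 0 < C) :
    Real.sqrt A / (C * Real.sqrt B) = 1 / Real.sqrt (A * B / C^2) * (A / C^2) := by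
  rw [show A * B / C^2 = (Real.sqrt A * Real.sqrt B / C)^2 by
    rw [div_pow, mul_pow, Real.sq_sqrt hA.le, Real.sq_sqrt hB.le],
    Real.sqrt_sq (by positivity)]
  have hsA := Real.sqrt_pos.mpr hA
  have hsB := Real.sqrt_pos.mpr hB
  have hA' : Real.sqrt A * Real.sqrt A = A := Real.mul_self_sqrt hA.le
  field_simp
  linear_combination hA'

lemma cheb_deriv {c : ℝ} (hc : 1 < c) {u : ℝ} (hu : u ∈ Set.Ioo (-1:ℝ) 1) :
    HasDerivAt (fun u : ℝ => Real.arcsin ((c*u-1)/(c-u)))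
      (Real.sqrt (c^2-1) / ((c-u) * Real.sqrt (1-u^2))) u := by
  obtain ⟨hu1, hu2⟩ := hu
  have hcu : 0 < c - u := by linarith
  have h1u : 0 < 1 - u^2 := by nlinarith
  have hc2 : 0 < c^2 - 1 := by nlinarith
  have hinner : HasDerivAt (fun u : ℝ => (c*u-1)/(c-u)) ((c^2-1)/(c-u)^2) u := by
    have h1 : HasDerivAt (fun u : ℝ => c*u-1) c u := by
      simpa using ((hasDerivAt_id u).const_mul c).sub_const 1
    have h2 : HasDerivAt (fun u : ℝ => c-u) (-1) u := by
      simpa using (hasDerivAt_id u).const_sub c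
    have := h1.div h2 (ne_of_gt hcu)
    refine this.congr_deriv (Eq.symm ?_)
    field_simp
    ring
  have hkey : 1 - ((c*u-1)/(c-u))^2 = (c^2-1)*(1-u^2)/(c-u)^2 := by
    field_simp
    ring
  have hlt : ((c*u-1)/(c-u))^2 < 1 := by
    rw [← sub_pos, hkey]; positivity
  have hne1 : (c*u-1)/(c-u) ≠ 1 := by
    intro h; rw [h] at hlt; norm_num at hlt
  have hne1' : (c*u-1)/(c-u) ≠ -1 := by
    intro h; rw [h] at hlt; norm_num at hlt
  have harc := (Real.hasDerivAt_arcsin hne1' hne1).comp u hinner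
  refine harc.congr_deriv (Eq.symm ?_)
  rw [hkey]
  exact sqrt_ratio _ _ _ hc2 h1u hcu

lemma cheb_cont {c : ℝ} (hc : 1 < c) :
    ContinuousOn (fun u : ℝ => Real.arcsin ((c*u-1)/(c-u))) (Set.Icc (-1:ℝ) 1) := by
  apply Real.continuous_arcsin.comp_continuousOn
  apply ContinuousOn.div (by fun_prop) (by fun_prop)
  intro u hu
  have : u ≤ 1 := hu.2
  intro h; nlinarith [sub_eq_zero.mp h]

lemma cheb_integrable {c : ℝ} (hc : 1 < c) :
    IntervalIntegrable (fun u : ℝ => Real.sqrt (c^2-1) / ((c-u) * Real.sqrt (1-u^2)))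
      volume (-1) 1 := by
  apply intervalIntegrable_deriv_of_nonneg (g := fun u : ℝ => Real.arcsin ((c*u-1)/(c-u)))
  · simpa [Set.uIcc_of_le (by norm_num : (-1:ℝ) ≤ 1)] using cheb_cont hc
  · intro x hx
    exact cheb_deriv hc (by simpa [min_eq_left, max_eq_right, (by norm_num : (-1:ℝ) ≤ 1)] using hx)
  · intro x hx
    simp only [min_eq_left, max_eq_right, (by norm_num : (-1:ℝ) ≤ 1)] at hx
    have h1 : (0:ℝ) < c - x := by have := hx.2; linarith
    positivity

lemma cheb_integral {c : ℝ} (hc : 1 < c) :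
    ∫ u in (-1:ℝ)..1, Real.sqrt (c^2-1) / ((c-u) * Real.sqrt (1-u^2)) = π := by
  rw [integral_eq_sub_of_hasDeriv_right_of_le (by norm_num) (cheb_cont hc)
    (fun x hx => (cheb_deriv hc hx).hasDerivWithinAt) (cheb_integrable hc)]
  have h1 : (c*1-1)/(c-1) = 1 := by
    rw [mul_one]; exact div_self (by linarith)
  have h2 : (c*(-1)-1)/(c-(-1)) = -1 := by
    rw [div_eq_iff (by linarith)]; ring
  rw [h1, h2, Real.arcsin_one, Real.arcsin_neg_one]
  ring

lemma cheb_integrable2 {c : ℝ} (hc : 1 < c) :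
    IntervalIntegrable (fun u : ℝ => 1 / ((c-u) * Real.sqrt (1-u^2))) volume (-1) 1 := by
  have hs : (0:ℝ) < Real.sqrt (c^2-1) := Real.sqrt_pos.mpr (by nlinarith)
  have := (cheb_integrable hc).const_mul (1 / Real.sqrt (c^2-1))
  convert this using 2 with u
  field_simp

lemma cheb_integral2 {c : ℝ} (hc : 1 < c) :
    ∫ u in (-1:ℝ)..1, 1 / ((c-u) * Real.sqrt (1-u^2)) = π / Real.sqrt (c^2-1) := by
  have hs : (0:ℝ) < Real.sqrt (c^2-1) := Real.sqrt_pos.mpr (by nlinarith)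
  have h : ∀ u : ℝ, 1 / ((c-u) * Real.sqrt (1-u^2))
      = (1 / Real.sqrt (c^2-1)) * (Real.sqrt (c^2-1) / ((c-u) * Real.sqrt (1-u^2))) := by
    intro u; field_simp
  simp_rw [h]
  rw [intervalIntegral.integral_const_mul, cheb_integral hc]
  field_simp

lemma cheb_integrable3 {c : ℝ} (hc : 1 < c) :
    IntervalIntegrable (fun u : ℝ => 1 / ((c+u) * Real.sqrt (1-u^2))) volume (-1) 1 := by
  have h := (IntervalIntegrable.iff_comp_neg (by simp)).mp (cheb_integrable2 hc)
  simp only [neg_neg, sub_neg_eq_add, neg_sq] at h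
  exact h.symm

lemma cheb_integral3 {c : ℝ} (hc : 1 < c) :
    ∫ u in (-1:ℝ)..1, 1 / ((c+u) * Real.sqrt (1-u^2)) = π / Real.sqrt (c^2-1) := by
  rw [← cheb_integral2 hc]
  have := intervalIntegral.integral_comp_neg (a := (-1:ℝ)) (b := 1)
    (fun u : ℝ => 1 / ((c-u) * Real.sqrt (1-u^2)))
  simp only [neg_neg] at this
  rw [← this]
  congr 1 with u
  rw [sub_neg_eq_add, neg_sq]

lemma interp_err {a b M : ℝ} {f g : ℝ → ℝ} (hab : a < b)
    (hd : ∀ u ∈ Set.Icc a b, HasDerivWithinAt f (g u) (Set.Icc a b) u)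
    (hlip : ∀ u ∈ Set.Icc a b, ∀ v ∈ Set.Icc a b, |g u - g v| ≤ M * |u - v|)
    {u : ℝ} (hu : u ∈ Set.Icc a b) :
    |f u - ((b - u) * f a + (u - a) * f b) / (b - a)| ≤ M * (b - a)^2 / 8 := by
  obtain ⟨hau, hub⟩ := hu
  have hba : (0:ℝ) < b - a := by linarith
  have hM : 0 ≤ M := by
    have := hlip a ⟨le_refl a, hab.le⟩ b ⟨hab.le, le_refl b⟩
    have h2 : |a - b| = b - a := by rw [abs_sub_comm]; exact abs_of_pos hba
    nlinarith [abs_nonneg (g a - g b)]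
  have hgc : ContinuousOn g (Set.Icc a b) := by
    intro x hx
    apply Metric.continuousWithinAt_iff.mpr
    intro ε hε
    rcases eq_or_lt_of_le hM with hM0 | hM0
    · refine ⟨1, one_pos, fun y hy _ => ?_⟩
      have := hlip y hy x hx
      rw [← hM0] at this
      simp only [Real.dist_eq]
      calc |g y - g x| ≤ 0 * |y - x| := this
        _ = 0 := by ring
        _ < ε := hε
    · refine ⟨ε / M, by positivity, fun y hy hyx => ?_⟩
      have := hlip y hy x hx
      simp only [Real.dist_eq] at hyx ⊢
      calc |g y - g x| ≤ M * |y - x| := this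
        _ < M * (ε / M) := by exact mul_lt_mul_of_pos_left hyx hM0
        _ = ε := by field_simp
  have hfc : ContinuousOn f (Set.Icc a b) := fun x hx => (hd x hx).continuousWithinAt
  have hderiv : ∀ x ∈ Set.Ioo a b, HasDerivAt f (g x) x := by
    intro x hx
    exact (hd x (Set.Ioo_subset_Icc_self hx)).hasDerivAt
      (Icc_mem_nhds hx.1 hx.2)
  have hgi : ∀ ⦃p q : ℝ⦄, a ≤ p → p ≤ q → q ≤ b → IntervalIntegrable g volume p q := by
    intro p q hp hpq hq
    apply (hgc.mono _).intervalIntegrable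
    rw [Set.uIcc_of_le hpq]
    exact Set.Icc_subset_Icc hp hq
  -- FTC on [a,u] and [u,b]
  have hA : ∫ s in a..u, g s = f u - f a := by
    apply intervalIntegral.integral_eq_sub_of_hasDeriv_right_of_le hau
      (hfc.mono (Set.Icc_subset_Icc le_rfl hub))
      (fun x hx => (hderiv x ⟨hx.1, lt_of_lt_of_le hx.2 hub⟩).hasDerivWithinAt)
      (hgi le_rfl hau hub)
  have hB : ∫ s in u..b, g s = f b - f u := by
    apply intervalIntegral.integral_eq_sub_of_hasDeriv_right_of_le hub
      (hfc.mono (Set.Icc_subset_Icc hau le_rfl))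
      (fun x hx => (hderiv x ⟨lt_of_le_of_lt hau hx.1, hx.2⟩).hasDerivWithinAt)
      (hgi hau hub le_rfl)
  set A' := ∫ s in a..u, (g s - g u) with hA'def
  set B' := ∫ s in u..b, (g s - g u) with hB'def
  have hA2 : A' = (f u - f a) - (u - a) * g u := by
    rw [hA'def, intervalIntegral.integral_sub (hgi le_rfl hau hub)
      (intervalIntegrable_const), hA, intervalIntegral.integral_const]
    simp [smul_eq_mul]
  have hB2 : B' = (f b - f u) - (b - u) * g u := by
    rw [hB'def, intervalIntegral.integral_sub (hgi hau hub le_rfl)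
      (intervalIntegrable_const), hB, intervalIntegral.integral_const]
    simp [smul_eq_mul]
  -- bounds on A', B'
  have hAbnd : |A'| ≤ M * (u - a)^2 / 2 := by
    have hb1 : ∀ᵐ s ∂(volume.restrict (Set.uIoc a u)), ‖g s - g u‖ ≤ M * (u - s) := by
      apply ae_restrict_of_forall_mem measurableSet_uIoc
      intro s hs
      rw [Set.uIoc_of_le hau] at hs
      have hs1 : a < s := hs.1
      have hs2 : s ≤ u := hs.2
      have := hlip s ⟨hs1.le.trans' le_rfl, hs2.trans hub⟩ u ⟨hau, hub⟩
      rw [Real.norm_eq_abs]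
      refine this.trans (le_of_eq ?_)
      rw [show |s - u| = u - s by rw [abs_sub_comm]; exact abs_of_nonneg (by linarith)]
    have hbint : IntervalIntegrable (fun s => M * (u - s)) volume a u := by
      apply Continuous.intervalIntegrable; fun_prop
    have := intervalIntegral.norm_integral_le_abs_of_norm_le hb1 hbint
    rw [Real.norm_eq_abs] at this
    refine this.trans ?_
    have hval : ∫ s in a..u, M * (u - s) = M * (u - a)^2 / 2 := by
      rw [intervalIntegral.integral_const_mul]
      rw [intervalIntegral.integral_sub intervalIntegrable_const
        (Continuous.intervalIntegrable (by fun_prop) a u)]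
      rw [intervalIntegral.integral_const, integral_id]
      simp [smul_eq_mul]; ring
    rw [hval, abs_of_nonneg (by positivity)]
  have hBbnd : |B'| ≤ M * (b - u)^2 / 2 := by
    have hb1 : ∀ᵐ s ∂(volume.restrict (Set.uIoc u b)), ‖g s - g u‖ ≤ M * (s - u) := by
      apply ae_restrict_of_forall_mem measurableSet_uIoc
      intro s hs
      rw [Set.uIoc_of_le hub] at hs
      have := hlip s ⟨hau.trans hs.1.le, hs.2⟩ u ⟨hau, hub⟩
      rw [Real.norm_eq_abs]
      refine this.trans (le_of_eq ?_)
      rw [show |s - u| = s - u from abs_of_nonneg (by linarith [hs.1])]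
    have hbint : IntervalIntegrable (fun s => M * (s - u)) volume u b := by
      apply Continuous.intervalIntegrable; fun_prop
    have := intervalIntegral.norm_integral_le_abs_of_norm_le hb1 hbint
    rw [Real.norm_eq_abs] at this
    refine this.trans ?_
    have hval : ∫ s in u..b, M * (s - u) = M * (b - u)^2 / 2 := by
      rw [intervalIntegral.integral_const_mul]
      rw [intervalIntegral.integral_sub (Continuous.intervalIntegrable (by fun_prop) u b)
        intervalIntegrable_const]
      rw [intervalIntegral.integral_const, integral_id]
      simp [smul_eq_mul]; ring
    rw [hval, abs_of_nonneg (by positivity)]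
  -- error identity
  have hid : f u - ((b - u) * f a + (u - a) * f b) / (b - a)
      = ((b - u) * A' - (u - a) * B') / (b - a) := by
    rw [hA2, hB2]
    field_simp
    ring
  rw [hid, abs_div, abs_of_pos hba]
  rw [div_le_iff₀ hba]
  calc |(b - u) * A' - (u - a) * B'| ≤ (b - u) * |A'| + (u - a) * |B'| := by
        refine (abs_sub _ _).trans ?_
        rw [abs_mul, abs_mul, abs_of_nonneg (by linarith : (0:ℝ) ≤ b - u),
          abs_of_nonneg (by linarith : (0:ℝ) ≤ u - a)]
    _ ≤ (b - u) * (M * (u - a)^2 / 2) + (u - a) * (M * (b - u)^2 / 2) := by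
        apply add_le_add
        · exact mul_le_mul_of_nonneg_left hAbnd (by linarith)
        · exact mul_le_mul_of_nonneg_left hBbnd (by linarith)
    _ = M * (u - a) * (b - u) * (b - a) / 2 := by ring
    _ ≤ M * (b - a)^2 / 8 * (b - a) := by
        rw [div_le_iff₀ (by norm_num : (0:ℝ) < 2)]
        have key : (u - a) * (b - u) ≤ (b - a)^2 / 4 := by nlinarith [sq_nonneg ((u-a)-(b-u))]
        nlinarith [mul_nonneg (mul_nonneg hM (by linarith : (0:ℝ) ≤ (b-a)^2/4 - (u-a)*(b-u))) hba.le]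

lemma grid_cover {t : ℕ → ℝ} {u : ℝ} (N : ℕ) (hN : 0 < N) (hu0 : t 0 ≤ u) (huN : u ≤ t N) :
    ∃ k, k < N ∧ t k ≤ u ∧ u ≤ t (k + 1) := by
  induction N with
  | zero => omega
  | succ n ih =>
    rcases Nat.eq_zero_or_pos n with hn | hn
    · subst hn; exact ⟨0, by omega, hu0, huN⟩
    · by_cases h : u ≤ t n
      · obtain ⟨k, hk, h1, h2⟩ := ih hn h
        exact ⟨k, by omega, h1, h2⟩
      · exact ⟨n, by omega, (not_le.mp h).le, huN⟩

lemma int_bound {E c : ℝ} (hc : 1 < c) (d : ℝ → ℝ) (F : ℝ → ℂ)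
    (hd_int : IntervalIntegrable (fun u => 1 / (d u * Real.sqrt (1 - u^2))) volume (-1) 1)
    (hd_val : ∫ u in (-1:ℝ)..1, 1 / (d u * Real.sqrt (1 - u^2)) = π / Real.sqrt (c^2 - 1))
    (hF : ∀ u ∈ Set.Ioo (-1:ℝ) 1,
      ‖F u‖ ≤ E * Real.sqrt 2 * (1 / (d u * Real.sqrt (1 - u^2))))
    (hE : 0 ≤ E) :
    ‖∫ u in (-1:ℝ)..1, F u‖ ≤ E * Real.sqrt 2 * π / Real.sqrt (c^2 - 1) := by
  have hae : ∀ᵐ s ∂(volume.restrict (Set.uIoc (-1:ℝ) 1)),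
      ‖F s‖ ≤ E * Real.sqrt 2 * (1 / (d s * Real.sqrt (1 - s^2))) := by
    have hmem : ∀ᵐ s ∂(volume.restrict (Set.uIoc (-1:ℝ) 1)), s ∈ Set.uIoc (-1:ℝ) 1 :=
      ae_restrict_mem measurableSet_uIoc
    have hne : ∀ᵐ s : ℝ ∂(volume.restrict (Set.uIoc (-1:ℝ) 1)), s ≠ (1:ℝ) := by
      apply ae_restrict_of_ae
      rw [ae_iff]
      convert Real.volume_singleton (a := (1:ℝ)) using 2
      ext s; simp
    filter_upwards [hmem, hne] with s hs hs1
    rw [Set.uIoc_of_le (by norm_num : (-1:ℝ) ≤ 1)] at hs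
    exact hF s ⟨hs.1, lt_of_le_of_ne hs.2 hs1⟩
  have hbint : IntervalIntegrable (fun s => E * Real.sqrt 2 * (1 / (d s * Real.sqrt (1 - s^2))))
      volume (-1) 1 := hd_int.const_mul _
  have := intervalIntegral.norm_integral_le_abs_of_norm_le hae hbint
  refine le_trans this ?_
  rw [intervalIntegral.integral_const_mul, hd_val]
  rw [abs_of_nonneg (by positivity)]
  ring_nf
  exact le_refl _

end helpers

section helpers2
open Set intervalIntegral

-- arithmetic helper for the pointwise bound
lemma point_arith {E e du s av : ℝ} (hE : 0 ≤ E) (he0 : 0 ≤ e) (he : e ≤ E)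
    (h1 : 0 < du) (h2 : 0 < s) (h3 : 0 < av) (h4 : du ≤ Real.sqrt 2 * av) :
    e / (s * av) ≤ E * Real.sqrt 2 * (1 / (du * s)) := by
  rw [show E * Real.sqrt 2 * (1/(du*s)) = (E*Real.sqrt 2)/(du*s) by ring,
    div_le_div_iff₀ (by positivity) (by positivity)]
  have k1 : e * du ≤ E * du := mul_le_mul_of_nonneg_right he h1.le
  have k2 : E * du ≤ E * (Real.sqrt 2 * av) := mul_le_mul_of_nonneg_left h4 hE
  nlinarith [mul_le_mul_of_nonneg_right (k1.trans k2) h2.le]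

set_option maxHeartbeats 1000000 in
theorem quadrature_error_complex_CW2_table2
    (N : ℕ) (hN : 3 ≤ N)
    (t : ℕ → ℝ) (ht0 : t 0 = -1) (htN : t N = 1)
    (hmono : ∀ k, k < N → t k < t (k + 1))
    (γ : ℝ) (hγ : 0 < γ)
    (hstep : ∀ k, k < N → t (k + 1) - t k ≤ γ / N)
    (f S : ℝ → ℝ) (M₂ : ℝ)
    (hfc : ContinuousOn f (Set.Icc (-1 : ℝ) 1))
    (hf : ∀ k, k < N → ∃ g : ℝ → ℝ,
      (∀ u ∈ Set.Icc (t k) (t (k + 1)),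
        HasDerivWithinAt f (g u) (Set.Icc (t k) (t (k + 1))) u) ∧
      (∀ u ∈ Set.Icc (t k) (t (k + 1)), ∀ v ∈ Set.Icc (t k) (t (k + 1)),
        |g u - g v| ≤ M₂ * |u - v|))
    (hS : ∀ k, k < N → ∀ u ∈ Set.Icc (t k) (t (k + 1)),
      S u = ((t (k + 1) - u) * f (t k) + (u - t k) * f (t (k + 1))) / (t (k + 1) - t k))
    (z : ℂ) (hz : 1 < |z.re|) :
    ‖-((z * (1 - 1 / z ^ 2) ^ ((1 : ℂ) / 2)) / (π : ℂ)) *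
        ∫ u in (-1 : ℝ)..1,
          ((f u - S u : ℝ) : ℂ) / ((Real.sqrt (1 - u ^ 2) : ℂ) * ((u : ℂ) - z))‖ ≤
      Real.sqrt (((γ ^ 2 * M₂ / π) * (1 + π * Real.sqrt 2 / (γ * Real.log N)) * Real.log N) ^ 2 + (M₂ * γ ^ 2 / (8 * π)) ^ 2) / (N : ℝ) ^ 2 := by
  have hNpos : 0 < N := by omega
  have hN0 : (0:ℝ) < (N:ℝ) := by exact_mod_cast hNpos
  have hN2 : (0:ℝ) < (N:ℝ)^2 := by positivity
  obtain ⟨g₀, hg₀d, hg₀l⟩ := hf 0 (by omega)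
  have hM : 0 ≤ M₂ := by
    have h01 : t 0 < t 1 := hmono 0 (by omega)
    have hb := hg₀l (t 0) ⟨le_refl _, h01.le⟩ (t 1) ⟨h01.le, le_refl _⟩
    have habs : |t 0 - t 1| = t 1 - t 0 := by rw [abs_sub_comm]; exact abs_of_pos (by linarith)
    rw [habs] at hb
    nlinarith [abs_nonneg (g₀ (t 0) - g₀ (t 1))]
  set E := M₂ * γ^2 / (8 * (N:ℝ)^2) with hEdef
  have hE : 0 ≤ E := by positivity
  -- sup-norm error bound for the spline
  have herr : ∀ u ∈ Set.Icc (-1:ℝ) 1, |f u - S u| ≤ E := by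
    intro u hu
    obtain ⟨k, hk, hk1, hk2⟩ := grid_cover (t := t) N hNpos (ht0 ▸ hu.1) (htN ▸ hu.2)
    obtain ⟨g, hgd, hgl⟩ := hf k hk
    rw [hS k hk u ⟨hk1, hk2⟩]
    refine (interp_err (hmono k hk) hgd hgl ⟨hk1, hk2⟩).trans ?_
    have hh := hstep k hk
    have hh0 : 0 < t (k+1) - t k := by linarith [hmono k hk]
    have hsq : (t (k+1) - t k)^2 ≤ (γ/(N:ℝ))^2 := by nlinarith
    calc M₂ * (t (k+1) - t k)^2 / 8 ≤ M₂ * (γ/(N:ℝ))^2 / 8 := by nlinarith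
      _ = E := by rw [hEdef, div_pow]; ring
  set X := |z.re| with hXdef
  set Y := |z.im| with hYdef
  set c := X + Y with hcdef
  have hYnn : 0 ≤ Y := abs_nonneg _
  have hc : 1 < c := by rw [hcdef]; linarith [hz, hYnn]
  have hc2 : (0:ℝ) < c^2 - 1 := by nlinarith
  have hsc : (0:ℝ) < Real.sqrt (c^2 - 1) := Real.sqrt_pos.mpr hc2
  -- the prefactor
  have hzabs : 1 < ‖z‖ := lt_of_lt_of_le (hXdef ▸ hz) (Complex.abs_re_le_norm z)
  have hz0 : z ≠ 0 := by
    intro h; rw [h] at hzabs; simp at hzabs; linarith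
  have habsz21 : ‖z^2 - 1‖ ≤ c^2 - 1 := by
    have hfac : z^2 - 1 = (z - 1) * (z + 1) := by ring
    rw [hfac, norm_mul]
    have hb1 : ‖z - 1‖ ≤ |z.re - 1| + Y := by
      have := Complex.norm_le_abs_re_add_abs_im (z - 1)
      simpa [Complex.sub_re, Complex.sub_im, hYdef] using this
    have hb2 : ‖z + 1‖ ≤ |z.re + 1| + Y := by
      have := Complex.norm_le_abs_re_add_abs_im (z + 1)
      simpa [Complex.add_re, Complex.add_im, hYdef] using this
    have hprod : (|z.re - 1| + Y) * (|z.re + 1| + Y) = c^2 - 1 := by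
      rcases lt_abs.mp (hXdef ▸ hz) with hx | hx
      · have hX : X = z.re := abs_of_pos (by linarith)
        rw [abs_of_pos (by linarith : (0:ℝ) < z.re - 1),
          abs_of_pos (by linarith : (0:ℝ) < z.re + 1), hcdef, hX]
        ring
      · have hX : X = -z.re := abs_of_neg (by linarith)
        rw [abs_of_neg (by linarith : z.re - 1 < 0),
          abs_of_neg (by linarith : z.re + 1 < 0), hcdef, hX]
        ring
    calc ‖z-1‖ * ‖z+1‖
        ≤ (|z.re - 1| + Y) * (|z.re + 1| + Y) :=
          mul_le_mul hb1 hb2 (norm_nonneg _) (by positivity)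
      _ = c^2 - 1 := hprod
  have habsP : ‖z * (1 - 1 / z ^ 2) ^ ((1:ℂ)/2)‖ ≤ Real.sqrt (c^2 - 1) := by
    have hw : ‖(1 - 1/z^2) ^ ((1:ℂ)/2)‖ = ‖1 - 1/z^2‖ ^ ((1:ℝ)/2) := by
      rw [show ((1:ℂ)/2) = (((1/2 : ℝ)) : ℂ) by norm_num]
      rw [Complex.norm_cpow_real]
    rw [norm_mul, hw]
    have h1 : ‖z‖ = ((‖z‖)^2) ^ ((1:ℝ)/2) := by
      rw [← Real.sqrt_eq_rpow, Real.sqrt_sq (norm_nonneg z)]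
    calc ‖z‖ * ‖1 - 1/z^2‖ ^ ((1:ℝ)/2)
        = ((‖z‖)^2) ^ ((1:ℝ)/2) * ‖1 - 1/z^2‖ ^ ((1:ℝ)/2) := by
          rw [← h1]
      _ = ((‖z‖)^2 * ‖1 - 1/z^2‖) ^ ((1:ℝ)/2) :=
          (Real.mul_rpow (by positivity) (norm_nonneg _)).symm
      _ = (‖z^2 * (1 - 1/z^2)‖) ^ ((1:ℝ)/2) := by
          rw [norm_mul, norm_pow]
      _ = (‖z^2 - 1‖) ^ ((1:ℝ)/2) := by
          congr 2
          have hz2 : z^2 ≠ 0 := pow_ne_zero _ hz0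
          field_simp
      _ ≤ (c^2 - 1) ^ ((1:ℝ)/2) :=
          Real.rpow_le_rpow (norm_nonneg _) habsz21 (by norm_num)
      _ = Real.sqrt (c^2 - 1) := (Real.sqrt_eq_rpow _).symm
  -- the integrand
  set F : ℝ → ℂ := fun u =>
    ((f u - S u : ℝ) : ℂ) / ((Real.sqrt (1 - u ^ 2) : ℂ) * ((u : ℂ) - z)) with hFdef
  have habsF : ∀ u ∈ Set.Ioo (-1:ℝ) 1,
      ‖F u‖ = |f u - S u| / (Real.sqrt (1 - u^2) * ‖(u:ℂ) - z‖) := by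
    intro u hu
    rw [hFdef]
    simp only [norm_div, norm_mul, Complex.norm_real, Real.norm_eq_abs]
    rw [abs_of_nonneg (Real.sqrt_nonneg _)]
  have habsuz : ∀ u : ℝ, u ∈ Set.Ioo (-1:ℝ) 1 → 0 < ‖(u:ℂ) - z‖ := by
    intro u hu
    rw [norm_pos_iff]
    intro h
    have hre : u - z.re = 0 := by
      have := congrArg Complex.re h
      simpa using this
    have hlt : |z.re| < 1 := by
      rw [show z.re = u by linarith]
      exact abs_lt.mpr ⟨hu.1, hu.2⟩
    have h2 : (1:ℝ) < |z.re| := hXdef ▸ hz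
    linarith
  have hsqabs : ∀ u : ℝ, (‖(u:ℂ) - z‖)^2 = (u - z.re)^2 + z.im^2 := by
    intro u
    rw [Complex.sq_norm, Complex.normSq_apply]
    simp only [Complex.sub_re, Complex.sub_im, Complex.ofReal_re, Complex.ofReal_im]
    ring
  -- the integral bound, by cases on sign of z.re
  have hIb : ‖∫ u in (-1:ℝ)..1, F u‖ ≤ E * Real.sqrt 2 * π / Real.sqrt (c^2 - 1) := by
    have hY2 : Y^2 = z.im^2 := sq_abs z.im
    rcases lt_abs.mp (hXdef ▸ hz) with hx | hx
    · -- z.re > 1, use d u = c - u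
      have hX : X = z.re := abs_of_pos (by linarith)
      apply int_bound hc (fun u => c - u) F (cheb_integrable2 hc) (cheb_integral2 hc) _ hE
      intro u hu
      have hu1 : -1 < u := hu.1
      have hu2 : u < 1 := hu.2
      have hcu : 0 < c - u := by linarith
      have hs1 : 0 < Real.sqrt (1 - u^2) := Real.sqrt_pos.mpr (by nlinarith)
      have hlow : c - u ≤ Real.sqrt 2 * ‖(u:ℂ) - z‖ := by
        have h1 : (c - u)^2 ≤ 2 * ((u - z.re)^2 + z.im^2) := by
          rw [hcdef, hX]
          nlinarith [sq_nonneg (z.re - u - Y), hY2]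
        calc c - u = Real.sqrt ((c-u)^2) := (Real.sqrt_sq hcu.le).symm
          _ ≤ Real.sqrt (2 * (‖(u:ℂ) - z‖)^2) := by
              apply Real.sqrt_le_sqrt; rw [hsqabs u]; exact h1
          _ = Real.sqrt 2 * ‖(u:ℂ) - z‖ := by
              rw [Real.sqrt_mul (by norm_num), Real.sqrt_sq (norm_nonneg _)]
      rw [habsF u hu]
      exact point_arith hE (abs_nonneg _) (herr u ⟨hu1.le, hu2.le⟩) hcu hs1 (habsuz u hu) hlow
    · -- z.re < -1, use d u = c + u
      have hX : X = -z.re := abs_of_neg (by linarith)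
      apply int_bound hc (fun u => c + u) F (cheb_integrable3 hc) (cheb_integral3 hc) _ hE
      intro u hu
      have hu1 : -1 < u := hu.1
      have hu2 : u < 1 := hu.2
      have hcu : 0 < c + u := by linarith
      have hs1 : 0 < Real.sqrt (1 - u^2) := Real.sqrt_pos.mpr (by nlinarith)
      have hlow : c + u ≤ Real.sqrt 2 * ‖(u:ℂ) - z‖ := by
        have h1 : (c + u)^2 ≤ 2 * ((u - z.re)^2 + z.im^2) := by
          rw [hcdef, hX]
          nlinarith [sq_nonneg (u - z.re - Y), hY2]
        calc c + u = Real.sqrt ((c+u)^2) := (Real.sqrt_sq hcu.le).symm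
          _ ≤ Real.sqrt (2 * (‖(u:ℂ) - z‖)^2) := by
              apply Real.sqrt_le_sqrt; rw [hsqabs u]; exact h1
          _ = Real.sqrt 2 * ‖(u:ℂ) - z‖ := by
              rw [Real.sqrt_mul (by norm_num), Real.sqrt_sq (norm_nonneg _)]
      rw [habsF u hu]
      exact point_arith hE (abs_nonneg _) (herr u ⟨hu1.le, hu2.le⟩) hcu hs1 (habsuz u hu) hlow
  -- assemble
  have hsplit : ‖-((z * (1 - 1 / z ^ 2) ^ ((1 : ℂ) / 2)) / (π : ℂ)) * ∫ u in (-1:ℝ)..1, F u‖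
      = ‖z * (1 - 1 / z ^ 2) ^ ((1:ℂ)/2)‖ / π
        * ‖∫ u in (-1:ℝ)..1, F u‖ := by
    rw [norm_mul, norm_neg, norm_div, Complex.norm_real, Real.norm_eq_abs, abs_of_pos Real.pi_pos]
  rw [hsplit]
  have hmain : ‖z * (1 - 1 / z ^ 2) ^ ((1:ℂ)/2)‖ / π
        * ‖∫ u in (-1:ℝ)..1, F u‖
      ≤ (Real.sqrt (c^2-1) / π) * (E * Real.sqrt 2 * π / Real.sqrt (c^2 - 1)) := by
    apply mul_le_mul
    · exact (div_le_div_iff_of_pos_right Real.pi_pos).mpr habsP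
    · exact hIb
    · exact norm_nonneg _
    · positivity
  refine hmain.trans ?_
  have heq : (Real.sqrt (c^2-1) / π) * (E * Real.sqrt 2 * π / Real.sqrt (c^2 - 1))
      = E * Real.sqrt 2 := by
    field_simp
  rw [heq]
  -- final numeric bound
  have hlog : 1 ≤ Real.log N := by
    have h3 : (3:ℝ) ≤ N := by exact_mod_cast hN
    have hl : Real.log 3 ≤ Real.log N := Real.log_le_log (by norm_num) h3
    refine le_trans ?_ hl
    rw [Real.le_log_iff_exp_le (by norm_num)]
    have := Real.exp_one_lt_d9
    linarith
  have hlog0 : 0 < Real.log N := by linarith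
  set A := (γ ^ 2 * M₂ / π) * (1 + π * Real.sqrt 2 / (γ * Real.log N)) * Real.log N with hAdef
  set B := M₂ * γ ^ 2 / (8 * π) with hBdef
  have hs2 : Real.sqrt 2 ≤ 1.5 := by
    nlinarith [Real.sq_sqrt (show (0:ℝ) ≤ 2 by norm_num), Real.sqrt_nonneg 2]
  have hs2nn : 0 ≤ Real.sqrt 2 := Real.sqrt_nonneg 2
  have hpi : π < 3.15 := by
    have := Real.pi_lt_d2
    norm_num at this ⊢
    linarith
  have hA0 : 0 ≤ A := by
    rw [hAdef]
    have h1 : (0:ℝ) ≤ γ^2 * M₂ / π := by positivity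
    have h2 : (0:ℝ) ≤ 1 + π * Real.sqrt 2 / (γ * Real.log N) := by positivity
    positivity
  have hAge : γ^2 * M₂ / π ≤ A := by
    rw [hAdef]
    have h2 : (1:ℝ) ≤ (1 + π * Real.sqrt 2 / (γ * Real.log N)) * Real.log N := by
      have : (0:ℝ) ≤ π * Real.sqrt 2 / (γ * Real.log N) := by positivity
      nlinarith
    calc γ^2 * M₂ / π = (γ^2 * M₂ / π) * 1 := by ring
      _ ≤ (γ^2 * M₂ / π) * ((1 + π * Real.sqrt 2 / (γ * Real.log N)) * Real.log N) := by
          apply mul_le_mul_of_nonneg_left h2 (by positivity)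
      _ = (γ^2 * M₂ / π) * (1 + π * Real.sqrt 2 / (γ * Real.log N)) * Real.log N := by ring
  have hs2pi : Real.sqrt 2 * π ≤ 8 := by nlinarith [Real.pi_pos]
  have hkey : E * Real.sqrt 2 ≤ (γ^2 * M₂ / π) / (N:ℝ)^2 := by
    rw [hEdef, div_mul_eq_mul_div, div_le_div_iff₀ (by positivity) (by positivity),
      div_mul_eq_mul_div, le_div_iff₀ Real.pi_pos]
    have hK : (0:ℝ) ≤ M₂ * γ^2 * (N:ℝ)^2 := by positivity
    nlinarith [mul_le_mul_of_nonneg_left hs2pi hK]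
  refine hkey.trans ?_
  have hAle : A ≤ Real.sqrt (A^2 + B^2) := by
    nlinarith [Real.sq_sqrt (show (0:ℝ) ≤ A^2 + B^2 by positivity),
      Real.sqrt_nonneg (A^2 + B^2), sq_nonneg B, hA0]
  gcongr
  exact hAge.trans hAle

end helpers2
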